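/- arXiv:2410.24060 — 2 statements merged into one kernel-verified Lean document; each statement's English description precedes it below -/
import Mathlib

section
/- Let d ≥ 1, let σ > 0, and let p be a probability measure on ℝ^d with mean μ and covariance Σ. Set W* = Σ(Σ + σ²I)⁻¹ and b* = (I − W*)μ. If a d×d real matrix W and b ∈ ℝ^d satisfy L(W, b) = L(W*, b*), then W = W* and b = b*; that is, the minimizer of the denoising score-matching objective over affine denoisers is unique. -/
open MeasureTheory ProbabilityTheory Matrix

/-- The isotropic Gaussian measure `N(0, σ²I)` on `ℝ^d` (with the Euclidean norm),
the product of `d` independent one-dimensional Gaussians of mean `0` and variance `σ²`. -/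
noncomputable def gaussVec (d : ℕ) (σ : ℝ) : Measure (EuclideanSpace ℝ (Fin d)) :=
  (Measure.pi fun _ : Fin d => gaussianReal 0 (Real.toNNReal (σ ^ 2))).map
    (MeasurableEquiv.toLp 2 (Fin d → ℝ))

/-- Reinterpret a plain vector as an element of Euclidean space. -/
def toE {d : ℕ} (v : Fin d → ℝ) : EuclideanSpace ℝ (Fin d) := WithLp.toLp 2 v

/-- The denoising score-matching loss `L(W, b)` of the affine denoiser `D(x) = Wx + b`:
`L(W, b) = ∫ ∫ ‖W(x+ε) + b − x‖² dN(0,σ²I)(ε) dp(x)`. -/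
noncomputable def dsmLoss (d : ℕ) (σ : ℝ) (p : Measure (EuclideanSpace ℝ (Fin d)))
    (W : Matrix (Fin d) (Fin d) ℝ) (b : EuclideanSpace ℝ (Fin d)) : ℝ :=
  ∫ x, ∫ ε, ‖toE (W.mulVec (x + ε)) + b - x‖ ^ 2 ∂(gaussVec d σ) ∂p

open Real Set
open scoped NNReal ENNReal

section OneDim
variable {v : ℝ≥0}

lemma gauss_integral_eq (hv : v ≠ 0) (f : ℝ → ℝ) :
    ∫ x, f x ∂(gaussianReal 0 v) = ∫ x, gaussianPDFReal 0 v x * f x := by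
  rw [gaussianReal_of_var_ne_zero 0 hv]
  have hm : Measurable fun x => (gaussianPDFReal 0 v x).toNNReal :=
    (measurable_gaussianPDFReal 0 v).real_toNNReal
  have : gaussianPDF 0 v = fun x => ((gaussianPDFReal 0 v x).toNNReal : ℝ≥0∞) := rfl
  rw [this, integral_withDensity_eq_integral_smul hm]
  congr 1; funext x
  rw [NNReal.smul_def, Real.coe_toNNReal _ (gaussianPDFReal_nonneg 0 v x), smul_eq_mul]

lemma gauss_integrable_iff (hv : v ≠ 0) (f : ℝ → ℝ) :
    Integrable f (gaussianReal 0 v) ↔ Integrable (fun x => gaussianPDFReal 0 v x * f x) volume := by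
  rw [gaussianReal_of_var_ne_zero 0 hv]
  have hm : Measurable fun x => (gaussianPDFReal 0 v x).toNNReal :=
    (measurable_gaussianPDFReal 0 v).real_toNNReal
  have : gaussianPDF 0 v = fun x => ((gaussianPDFReal 0 v x).toNNReal : ℝ≥0∞) := rfl
  rw [this, integrable_withDensity_iff_integrable_smul hm]
  constructor <;> intro h <;> [skip; skip] <;>
  · apply h.congr; filter_upwards with x
    rw [NNReal.smul_def, Real.coe_toNNReal _ (gaussianPDFReal_nonneg 0 v x), smul_eq_mul]

lemma gaussianPDFReal_zero_eq (hv : v ≠ 0) (x : ℝ) :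
    gaussianPDFReal 0 v x = (Real.sqrt (2 * π * v))⁻¹ * Real.exp (-((2 * (v:ℝ))⁻¹) * x ^ 2) := by
  rw [gaussianPDFReal_def]
  simp only [sub_zero]
  congr 1
  rw [neg_mul, neg_div]
  congr 1
  rw [div_eq_inv_mul]

end OneDim

section Moments
variable {v : ℝ≥0}

lemma integral_x_exp (bb : ℝ) : ∫ x : ℝ, x * Real.exp (-bb * x ^ 2) = 0 := by
  have hemb : MeasurableEmbedding (fun x : ℝ => -x) :=
    (Homeomorph.neg ℝ).isClosedEmbedding.measurableEmbedding
  have hmp := Measure.measurePreserving_neg (volume : Measure ℝ)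
  have A := hmp.integral_comp hemb (fun x => x * Real.exp (-bb * x ^ 2))
  simp only [neg_sq, neg_mul] at A
  rw [integral_neg] at A
  simp only [neg_mul]
  linarith

lemma integral_sq_exp {bb : ℝ} (hb : 0 < bb) :
    ∫ x : ℝ, x ^ 2 * Real.exp (-bb * x ^ 2) = bb ^ (-(3:ℝ)/2) * Real.Gamma (3/2) := by
  have h1 : ∫ x : ℝ, x ^ 2 * Real.exp (-bb * x ^ 2)
      = 2 * ∫ x in Ioi (0:ℝ), x ^ 2 * Real.exp (-bb * x ^ 2) := by
    rw [← integral_comp_abs (f := fun x => x ^ 2 * Real.exp (-bb * x ^ 2))]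
    congr 1; funext x; rw [sq_abs]
  have h2 : ∫ x in Ioi (0:ℝ), x ^ 2 * Real.exp (-bb * x ^ 2)
      = ∫ x in Ioi (0:ℝ), x ^ (2:ℝ) * Real.exp (-bb * x ^ (2:ℝ)) := by
    refine setIntegral_congr_fun measurableSet_Ioi (fun x hx => ?_)
    rw [show ((2:ℝ)) = ((2:ℕ):ℝ) by norm_num, Real.rpow_natCast]
  rw [h1, h2, integral_rpow_mul_exp_neg_mul_rpow (by norm_num) (by norm_num) hb]
  ring

lemma gauss_integral_id (hv : v ≠ 0) : ∫ x, x ∂(gaussianReal 0 v) = 0 := by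
  rw [gauss_integral_eq hv]
  calc ∫ x, gaussianPDFReal 0 v x * x
      = ∫ x, (Real.sqrt (2 * π * v))⁻¹ * (x * Real.exp (-((2 * (v:ℝ))⁻¹) * x ^ 2)) := by
        congr 1; funext x; rw [gaussianPDFReal_zero_eq hv]; ring
    _ = (Real.sqrt (2 * π * v))⁻¹ * ∫ x, x * Real.exp (-((2 * (v:ℝ))⁻¹) * x ^ 2) := by
        rw [integral_const_mul]
    _ = 0 := by rw [integral_x_exp]; ring

lemma gauss_integral_sq (hv : v ≠ 0) : ∫ x, x ^ 2 ∂(gaussianReal 0 v) = v := by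
  have hvpos : (0:ℝ) < v := lt_of_le_of_ne v.coe_nonneg (by exact_mod_cast (Ne.symm hv))
  have hb : (0:ℝ) < (2 * (v:ℝ))⁻¹ := by positivity
  rw [gauss_integral_eq hv]
  calc ∫ x, gaussianPDFReal 0 v x * x ^ 2
      = ∫ x, (Real.sqrt (2 * π * v))⁻¹ * (x ^ 2 * Real.exp (-((2 * (v:ℝ))⁻¹) * x ^ 2)) := by
        congr 1; funext x; rw [gaussianPDFReal_zero_eq hv]; ring
    _ = (Real.sqrt (2 * π * v))⁻¹ * (((2 * (v:ℝ))⁻¹) ^ (-(3:ℝ)/2) * Real.Gamma (3/2)) := by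
        rw [integral_const_mul, integral_sq_exp hb]
    _ = v := by
        have hG : Real.Gamma (3/2) = (1/2) * Real.sqrt π := by
          rw [show (3/2 : ℝ) = 1/2 + 1 by norm_num, Real.Gamma_add_one (by norm_num),
            Real.Gamma_one_half_eq]
        have h2v : (0:ℝ) < 2 * v := by positivity
        have hr : ((2 * (v:ℝ))⁻¹) ^ (-(3:ℝ)/2) = (2 * (v:ℝ)) * Real.sqrt (2 * v) := by
          rw [Real.inv_rpow h2v.le, ← Real.rpow_neg h2v.le]
          rw [show -(-(3:ℝ)/2) = 1 + 1/2 by norm_num]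
          rw [Real.rpow_add h2v, Real.rpow_one, ← Real.sqrt_eq_rpow]
        have hsplit : Real.sqrt (2 * π * v) = Real.sqrt π * Real.sqrt (2 * v) := by
          rw [← Real.sqrt_mul pi_pos.le]
          congr 1; ring
        rw [hr, hG, hsplit]
        have hsp : Real.sqrt π ≠ 0 := by positivity
        have hs2v : Real.sqrt (2 * v) ≠ 0 := by positivity
        field_simp
end Moments

section Integrab
variable {v : ℝ≥0}

lemma gauss_integrable_id (hv : v ≠ 0) : Integrable (fun x : ℝ => x) (gaussianReal 0 v) := by
  rw [gauss_integrable_iff hv]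
  have hb : (0:ℝ) < (2 * (v:ℝ))⁻¹ := by
    have hvpos : (0:ℝ) < v := lt_of_le_of_ne v.coe_nonneg (by exact_mod_cast (Ne.symm hv))
    positivity
  have h := (integrable_mul_exp_neg_mul_sq hb).const_mul (Real.sqrt (2 * π * v))⁻¹
  apply h.congr
  filter_upwards with x
  rw [gaussianPDFReal_zero_eq hv]; ring

lemma gauss_integrable_sq (hv : v ≠ 0) :
    Integrable (fun x : ℝ => x ^ 2) (gaussianReal 0 v) := by
  rw [gauss_integrable_iff hv]
  have hb : (0:ℝ) < (2 * (v:ℝ))⁻¹ := by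
    have hvpos : (0:ℝ) < v := lt_of_le_of_ne v.coe_nonneg (by exact_mod_cast (Ne.symm hv))
    positivity
  have h0 := integrable_rpow_mul_exp_neg_mul_sq hb (s := (2:ℝ)) (by norm_num)
  rw [show ((2:ℝ)) = ((2:ℕ):ℝ) by norm_num] at h0
  simp only [Real.rpow_natCast] at h0
  have h := h0.const_mul (Real.sqrt (2 * π * v))⁻¹
  apply h.congr
  filter_upwards with x
  rw [gaussianPDFReal_zero_eq hv]; push_cast; ring

end Integrab

section Pi
variable {ι E : Type*} [Fintype ι] [MeasurableSpace E]

lemma pi_integral_prod (m : Measure E) [SigmaFinite m] (f : ι → E → ℝ) :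
    ∫ y, ∏ i, f i (y i) ∂(Measure.pi fun _ : ι => m) = ∏ i, ∫ t, f i t ∂m := by
  letI : MeasureSpace E := ⟨m⟩
  exact integral_fintype_prod_eq_prod f

lemma pi_integrable_prod (m : Measure E) [SigmaFinite m] {f : ι → E → ℝ}
    (hf : ∀ i, Integrable (f i) m) :
    Integrable (fun y : ι → E => ∏ i, f i (y i)) (Measure.pi fun _ : ι => m) := by
  letI : MeasureSpace E := ⟨m⟩
  exact Integrable.fintype_prod hf

end Pi

section Nu
variable {d : ℕ} {v : ℝ≥0}

lemma nu_key (j k : Fin d) : (fun y : Fin d → ℝ => y j * y k)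
    = fun y => ∏ i, ((if i = j then y i else 1) * (if i = k then y i else 1)) := by
  funext y
  rw [Finset.prod_mul_distrib, Finset.prod_ite_eq', Finset.prod_ite_eq']
  simp

lemma nu_key1 (j : Fin d) : (fun y : Fin d → ℝ => y j)
    = fun y => ∏ i, (if i = j then y i else 1) := by
  funext y; rw [Finset.prod_ite_eq']; simp

lemma nu_fi_integrable (hv : v ≠ 0) (j k : Fin d) (i : Fin d) :
    Integrable (fun t : ℝ => (if i = j then t else 1) * (if i = k then t else 1))
      (gaussianReal 0 v) := by
  by_cases hij : i = j <;> by_cases hik : i = k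
  · simp only [if_pos hij, if_pos hik]
    simpa [pow_two] using gauss_integrable_sq hv
  · simp only [if_pos hij, if_neg hik, mul_one]
    exact gauss_integrable_id hv
  · simp only [if_neg hij, if_pos hik, one_mul]
    exact gauss_integrable_id hv
  · simp only [if_neg hij, if_neg hik, mul_one]
    exact integrable_const (1:ℝ)

lemma nu_fi_integrable1 (hv : v ≠ 0) (j : Fin d) (i : Fin d) :
    Integrable (fun t : ℝ => (if i = j then t else 1)) (gaussianReal 0 v) := by
  by_cases hij : i = j
  · simp only [if_pos hij]; exact gauss_integrable_id hv
  · simp only [if_neg hij]; exact integrable_const (1:ℝ)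

lemma nu_integrable_coord (hv : v ≠ 0) (j : Fin d) :
    Integrable (fun y : Fin d → ℝ => y j) (Measure.pi fun _ : Fin d => gaussianReal 0 v) := by
  rw [nu_key1 j]
  exact pi_integrable_prod _ (nu_fi_integrable1 hv j)

lemma nu_integrable_coord_mul (hv : v ≠ 0) (j k : Fin d) :
    Integrable (fun y : Fin d → ℝ => y j * y k)
      (Measure.pi fun _ : Fin d => gaussianReal 0 v) := by
  rw [nu_key j k]
  exact pi_integrable_prod _ (nu_fi_integrable hv j k)

lemma nu_integral_coord (hv : v ≠ 0) (j : Fin d) :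
    ∫ y, y j ∂(Measure.pi fun _ : Fin d => gaussianReal 0 v) = 0 := by
  rw [nu_key1 j]
  refine (pi_integral_prod (gaussianReal 0 v) (fun i t => if i = j then t else 1)).trans ?_
  refine Finset.prod_eq_zero (Finset.mem_univ j) ?_
  simpa using gauss_integral_id hv

lemma nu_integral_coord_mul (hv : v ≠ 0) (j k : Fin d) :
    ∫ y, y j * y k ∂(Measure.pi fun _ : Fin d => gaussianReal 0 v)
      = if j = k then (v:ℝ) else 0 := by
  rw [nu_key j k]
  refine (pi_integral_prod (gaussianReal 0 v)
    (fun i t => (if i = j then t else 1) * (if i = k then t else 1))).trans ?_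
  have hstep : ∀ i : Fin d, ∫ t, (if i = j then t else 1) * (if i = k then t else 1)
      ∂(gaussianReal 0 v)
      = if i = j then (if i = k then (v:ℝ) else 0) else (if i = k then 0 else 1) := by
    intro i
    by_cases hij : i = j <;> by_cases hik : i = k
    · simp only [if_pos hij, if_pos hik]
      simpa [pow_two] using gauss_integral_sq hv
    · simp only [if_pos hij, if_neg hik, mul_one]
      exact gauss_integral_id hv
    · simp only [if_neg hij, if_pos hik, one_mul]
      exact gauss_integral_id hv
    · simp only [if_neg hij, if_neg hik, mul_one]
      simp
  rw [Finset.prod_congr rfl (fun i _ => hstep i)]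
  by_cases hjk : j = k
  · subst hjk
    simp only [if_pos, ite_self]
    rw [show (fun i : Fin d => if i = j then (if i = j then (v:ℝ) else 0) else if i = j then 0 else 1)
      = fun i => if i = j then (v:ℝ) else 1 from funext fun i => by by_cases h : i = j <;> simp [h]]
    rw [Finset.prod_ite_eq']
    simp
  · rw [if_neg hjk]
    refine Finset.prod_eq_zero (Finset.mem_univ j) ?_
    simp [hjk]

end Nu

section Quad
variable {α : Type*} [MeasurableSpace α] {m : Measure α} [IsProbabilityMeasure m] {d : ℕ}

lemma memℒ2_mul_integrable {f g : α → ℝ} (hf : MemLp f 2 m) (hg : MemLp g 2 m) :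
    Integrable (fun a => f a * g a) m := by
  have h1 := hf.integrable_sq
  have h2 := hg.integrable_sq
  have h3 := (hf.add hg).integrable_sq
  have key : (fun a => f a * g a)
      = fun a => (((f a + g a) ^ 2 - f a ^ 2) - g a ^ 2) / 2 := by
    funext a; ring
  rw [key]
  exact (((h3.sub h1).sub h2).div_const 2)

lemma quad_integrable {z : Fin d → α → ℝ}
    (h1 : ∀ j, Integrable (z j) m)
    (h2 : ∀ j k, Integrable (fun a => z j a * z k a) m)
    (C : ℝ) (A : Fin d → ℝ) (B : Fin d → Fin d → ℝ) :
    Integrable (fun a => C + (∑ j, A j * z j a)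
      + ∑ j, ∑ k, B j k * (z j a * z k a)) m := by
  refine Integrable.add (Integrable.add (integrable_const C) ?_) ?_
  · exact integrable_finset_sum _ (fun j _ => (h1 j).const_mul _)
  · exact integrable_finset_sum _ (fun j _ =>
      integrable_finset_sum _ (fun k _ => (h2 j k).const_mul _))

lemma quad_integral {z : Fin d → α → ℝ} {R : Fin d → Fin d → ℝ}
    (h1 : ∀ j, Integrable (z j) m)
    (h2 : ∀ j k, Integrable (fun a => z j a * z k a) m)
    (hz0 : ∀ j, ∫ a, z j a ∂m = 0)
    (hzz : ∀ j k, ∫ a, z j a * z k a ∂m = R j k)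
    (C : ℝ) (A : Fin d → ℝ) (B : Fin d → Fin d → ℝ) :
    ∫ a, (C + (∑ j, A j * z j a) + ∑ j, ∑ k, B j k * (z j a * z k a)) ∂m
      = C + ∑ j, ∑ k, B j k * R j k := by
  rw [integral_add (f := fun a => C + ∑ j, A j * z j a)
      (g := fun a => ∑ j, ∑ k, B j k * (z j a * z k a))
      (Integrable.add (integrable_const C)
      (integrable_finset_sum _ (fun j _ => (h1 j).const_mul _)))
      (integrable_finset_sum _ (fun j _ =>
        integrable_finset_sum _ (fun k _ => (h2 j k).const_mul _))),
    integral_add (f := fun _ => C) (g := fun a => ∑ j, A j * z j a) (integrable_const C)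
      (integrable_finset_sum _ (fun j _ => (h1 j).const_mul _)),
    integral_const,
    integral_finset_sum _ (fun j _ => (h1 j).const_mul _),
    integral_finset_sum _ (fun j _ =>
      integrable_finset_sum _ (fun k _ => (h2 j k).const_mul _))]
  have e1 : ∀ j : Fin d, ∫ a, A j * z j a ∂m = 0 := by
    intro j; rw [integral_const_mul, hz0 j, mul_zero]
  have e2 : ∀ j : Fin d, ∫ a, ∑ k, B j k * (z j a * z k a) ∂m = ∑ k, B j k * R j k := by
    intro j
    rw [integral_finset_sum _ (fun k _ => (h2 j k).const_mul _)]
    exact Finset.sum_congr rfl fun k _ => by rw [integral_const_mul, hzz j k]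
  simp only [e1, e2, Finset.sum_const_zero, probReal_univ, ENNReal.toReal_one, one_smul, add_zero]

lemma sum_sq_expand (c : Fin d → ℝ) (M : Matrix (Fin d) (Fin d) ℝ) (y : Fin d → ℝ) :
    ∑ i, (c i + ∑ j, M i j * y j) ^ 2
      = (∑ i, c i ^ 2) + (∑ j, (∑ i, 2 * c i * M i j) * y j)
        + ∑ j, ∑ k, (∑ i, M i j * M i k) * (y j * y k) := by
  have step : ∀ i : Fin d, (c i + ∑ j, M i j * y j) ^ 2
      = c i ^ 2 + (∑ j, (2 * c i * M i j) * y j)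
        + ∑ j, ∑ k, (M i j * M i k) * (y j * y k) := by
    intro i
    have hTT : (∑ j, M i j * y j) * (∑ k, M i k * y k)
        = ∑ j, ∑ k, (M i j * M i k) * (y j * y k) := by
      rw [Finset.sum_mul_sum]
      exact Finset.sum_congr rfl fun j _ => Finset.sum_congr rfl fun k _ => by ring
    have hcT : 2 * c i * (∑ j, M i j * y j) = ∑ j, (2 * c i * M i j) * y j := by
      rw [Finset.mul_sum]
      exact Finset.sum_congr rfl fun j _ => by ring
    calc (c i + ∑ j, M i j * y j) ^ 2
        = c i ^ 2 + 2 * c i * (∑ j, M i j * y j)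
          + (∑ j, M i j * y j) * (∑ k, M i k * y k) := by ring
      _ = _ := by rw [hTT, hcT]
  rw [Finset.sum_congr rfl (fun i _ => step i)]
  rw [Finset.sum_add_distrib, Finset.sum_add_distrib]
  congr 1
  · congr 1
    rw [Finset.sum_comm]
    exact Finset.sum_congr rfl fun j _ => by rw [Finset.sum_mul]
  · rw [Finset.sum_comm]
    refine Finset.sum_congr rfl fun j _ => ?_
    rw [Finset.sum_comm]
    exact Finset.sum_congr rfl fun k _ => by rw [Finset.sum_mul]

lemma euclid_norm_sq {d : ℕ} (w : EuclideanSpace ℝ (Fin d)) : ‖w‖ ^ 2 = ∑ i, w i ^ 2 := by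
  rw [EuclideanSpace.norm_eq, Real.sq_sqrt (by positivity)]
  exact Finset.sum_congr rfl fun i _ => by rw [Real.norm_eq_abs, sq_abs]

end Quad

section Closed
variable {d : ℕ} {σ : ℝ}

set_option maxHeartbeats 1000000 in
lemma dsm_closed (d : ℕ) (σ : ℝ) (hσ : 0 < σ)
    (p : Measure (EuclideanSpace ℝ (Fin d))) [IsProbabilityMeasure p]
    (μ : EuclideanSpace ℝ (Fin d)) (S : Matrix (Fin d) (Fin d) ℝ)
    (hp2 : MemLp id 2 p) (hmean : ∫ x, x ∂p = μ)
    (hcov : ∀ i j, ∫ x, (x i - μ i) * (x j - μ j) ∂p = S i j)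
    (W : Matrix (Fin d) (Fin d) ℝ) (b : EuclideanSpace ℝ (Fin d)) :
    dsmLoss d σ p W b =
      (∑ i, (((W - 1).mulVec μ) i + b i) ^ 2)
      + (∑ j, ∑ k, (∑ i, (W - 1) i j * (W - 1) i k) * S j k)
      + σ ^ 2 * ∑ i, ∑ j, (W i j) ^ 2 := by
  have hv : (Real.toNNReal (σ ^ 2)) ≠ 0 := by
    rw [Ne, Real.toNNReal_eq_zero]; push_neg; positivity
  have hvr : ((Real.toNNReal (σ ^ 2)) : ℝ) = σ ^ 2 := Real.coe_toNNReal _ (sq_nonneg σ)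
  -- coordinate formula for mulVec of (W - 1)
  have hsub : ∀ (u : Fin d → ℝ) (i : Fin d),
      ((W - 1).mulVec u) i = (∑ j, W i j * u j) - u i := by
    intro u i
    simp only [Matrix.mulVec, dotProduct, Matrix.sub_apply, Matrix.one_apply, sub_mul,
      Finset.sum_sub_distrib, ite_mul, one_mul, zero_mul, Finset.sum_ite_eq, Finset.mem_univ,
      if_true]
  -- inner integral
  have hinner : ∀ x : EuclideanSpace ℝ (Fin d),
      (∫ ε, ‖toE (W.mulVec (x + ε)) + b - x‖ ^ 2 ∂(gaussVec d σ))
        = (∑ i, (((W - 1).mulVec x) i + b i) ^ 2)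
          + σ ^ 2 * ∑ i, ∑ j, (W i j) ^ 2 := by
    intro x
    have hpt : ∀ y : Fin d → ℝ,
        ‖toE (W.mulVec (x + (MeasurableEquiv.toLp 2 (Fin d → ℝ)) y)) + b - x‖ ^ 2
        = (∑ i, (((W - 1).mulVec x) i + b i) ^ 2)
          + (∑ j, (∑ i, 2 * (((W - 1).mulVec x) i + b i) * W i j) * y j)
          + ∑ j, ∑ k, (∑ i, W i j * W i k) * (y j * y k) := by
      intro y
      rw [euclid_norm_sq, ← sum_sq_expand (fun i => ((W - 1).mulVec x) i + b i) W y]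
      refine Finset.sum_congr rfl fun i _ => ?_
      congr 1
      have hco : (toE (W.mulVec (x + (MeasurableEquiv.toLp 2 (Fin d → ℝ)) y)) + b - x) i
          = (∑ j, W i j * (x j + y j)) + b i - x i := by
        simp only [PiLp.add_apply, PiLp.sub_apply, toE, Matrix.mulVec, dotProduct]
        rfl
      rw [hco, hsub x i]
      have : ∑ j, W i j * (x j + y j) = (∑ j, W i j * x j) + ∑ j, W i j * y j := by
        rw [← Finset.sum_add_distrib]
        exact Finset.sum_congr rfl fun j _ => by ring
      rw [this]; ring
    unfold gaussVec
    rw [integral_map_equiv]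
    simp only [hpt]
    refine (quad_integral (m := Measure.pi fun _ : Fin d => gaussianReal 0 (Real.toNNReal (σ ^ 2)))
      (z := fun j (y : Fin d → ℝ) => y j)
      (R := fun j k => if j = k then ((Real.toNNReal (σ ^ 2)) : ℝ) else 0)
      (nu_integrable_coord hv) (nu_integrable_coord_mul hv)
      (nu_integral_coord hv) (nu_integral_coord_mul hv) _ _ _).trans ?_
    congr 1
    have hrow : ∀ j : Fin d, ∑ k, (∑ i, W i j * W i k)
        * (if j = k then ((Real.toNNReal (σ ^ 2)) : ℝ) else 0)
        = (∑ i, W i j * W i j) * σ ^ 2 := by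
      intro j
      simp only [mul_ite, mul_zero, Finset.sum_ite_eq, Finset.mem_univ, if_true, hvr]
    rw [Finset.sum_congr rfl fun j _ => hrow j, ← Finset.sum_mul, Finset.sum_comm, mul_comm]
    congr 1
    exact Finset.sum_congr rfl fun i _ => Finset.sum_congr rfl fun j _ => by ring
  -- p-side facts
  have hpcoord : ∀ j, MemLp (fun x : EuclideanSpace ℝ (Fin d) => x j) 2 p := by
    intro j
    have := (EuclideanSpace.proj j (𝕜 := ℝ) (ι := Fin d)).comp_memLp' hp2
    simpa [Function.comp] using this
  have hz2 : ∀ j, MemLp (fun x : EuclideanSpace ℝ (Fin d) => x j - μ j) 2 p :=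
    fun j => (hpcoord j).sub (memLp_const _)
  have hz1 : ∀ j, Integrable (fun x : EuclideanSpace ℝ (Fin d) => x j - μ j) p :=
    fun j => (hz2 j).integrable one_le_two
  have hzz : ∀ j k, Integrable
      (fun x : EuclideanSpace ℝ (Fin d) => (x j - μ j) * (x k - μ k)) p :=
    fun j k => memℒ2_mul_integrable (hz2 j) (hz2 k)
  have hmean' : ∀ j, ∫ x, x j ∂p = μ j := by
    intro j
    have hid : Integrable (fun x : EuclideanSpace ℝ (Fin d) => x) p := by
      simpa [Function.id_def] using hp2.integrable one_le_two
    have h := (EuclideanSpace.proj j (𝕜 := ℝ) (ι := Fin d)).integral_comp_comm hid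
    simpa [hmean] using h
  have hz0 : ∀ j, ∫ x, (x j - μ j) ∂p = 0 := by
    intro j
    rw [integral_sub ((hpcoord j).integrable one_le_two) (integrable_const _), hmean' j,
      integral_const, probReal_univ]
    simp
  -- expand coordinates around μ
  have hcexp : ∀ (x : EuclideanSpace ℝ (Fin d)) (i : Fin d),
      ((W - 1).mulVec x) i + b i
      = ((((W - 1).mulVec μ) i + b i) + ∑ j, (W - 1) i j * (x j - μ j)) := by
    intro x i
    have h1 : ∑ j, (W - 1) i j * (x j - μ j)
        = (∑ j, (W - 1) i j * x j) - ∑ j, (W - 1) i j * μ j := by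
      rw [← Finset.sum_sub_distrib]
      exact Finset.sum_congr rfl fun j _ => by ring
    have h2 : ((W - 1).mulVec x) i = ∑ j, (W - 1) i j * x j := rfl
    have h3 : ((W - 1).mulVec μ) i = ∑ j, (W - 1) i j * μ j := rfl
    rw [h1, h2, h3]; ring
  have hpt2 : ∀ x : EuclideanSpace ℝ (Fin d),
      (∑ i, (((W - 1).mulVec x) i + b i) ^ 2) + σ ^ 2 * ∑ i, ∑ j, (W i j) ^ 2
      = ((∑ i, (((W - 1).mulVec μ) i + b i) ^ 2)
          + (∑ j, (∑ i, 2 * (((W - 1).mulVec μ) i + b i) * (W - 1) i j) * (x j - μ j))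
          + ∑ j, ∑ k, (∑ i, (W - 1) i j * (W - 1) i k) * ((x j - μ j) * (x k - μ k)))
        + σ ^ 2 * ∑ i, ∑ j, (W i j) ^ 2 := by
    intro x
    congr 1
    rw [Finset.sum_congr rfl fun i _ => by rw [hcexp x i]]
    exact sum_sq_expand (fun i => ((W - 1).mulVec μ) i + b i) (W - 1) (fun j => x j - μ j)
  unfold dsmLoss
  simp only [hinner, hpt2]
  rw [integral_add (f := fun x : EuclideanSpace ℝ (Fin d) =>
      (∑ i, (((W - 1).mulVec μ) i + b i) ^ 2)
        + (∑ j, (∑ i, 2 * (((W - 1).mulVec μ) i + b i) * (W - 1) i j) * (x j - μ j))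
        + ∑ j, ∑ k, (∑ i, (W - 1) i j * (W - 1) i k) * ((x j - μ j) * (x k - μ k)))
      (g := fun _ => σ ^ 2 * ∑ i, ∑ j, (W i j) ^ 2)
      (quad_integrable hz1 hzz _ _ _) (integrable_const _),
    quad_integral hz1 hzz hz0 (fun j k => hcov j k) _ _ _, integral_const, probReal_univ]
  simp

end Closed

section Alg2
variable {d : ℕ}

variable {d : ℕ}

lemma sum3_rot {d : ℕ} (f : Fin d → Fin d → Fin d → ℝ) :
    ∑ j, ∑ k, ∑ i, f i j k = ∑ i, ∑ j, ∑ k, f i j k := by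
  calc ∑ j, ∑ k, ∑ i, f i j k
      = ∑ j, ∑ i, ∑ k, f i j k := Finset.sum_congr rfl fun j _ => Finset.sum_comm
    _ = ∑ i, ∑ j, ∑ k, f i j k := Finset.sum_comm

lemma conv1 (V S : Matrix (Fin d) (Fin d) ℝ) :
    ∑ j, ∑ k, (∑ i, V i j * V i k) * S j k = trace (V * S * Vᵀ) := by
  have htr : trace (V * S * Vᵀ) = ∑ i, ∑ j, ∑ k, V i j * S j k * V i k := by
    simp only [Matrix.trace, Matrix.diag_apply, Matrix.mul_apply, Matrix.transpose_apply,
      Finset.sum_mul]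
    exact Finset.sum_congr rfl fun i _ => Finset.sum_comm
  rw [htr]
  simp only [Finset.sum_mul]
  rw [sum3_rot (fun i j k => V i j * V i k * S j k)]
  exact Finset.sum_congr rfl fun i _ => Finset.sum_congr rfl fun j _ =>
    Finset.sum_congr rfl fun k _ => by ring

lemma conv2 (V : Matrix (Fin d) (Fin d) ℝ) :
    ∑ i, ∑ j, (V i j) ^ 2 = trace (V * Vᵀ) := by
  simp only [Matrix.trace, Matrix.diag_apply, Matrix.mul_apply, Matrix.transpose_apply]
  exact Finset.sum_congr rfl fun i _ => Finset.sum_congr rfl fun j _ => (sq (V i j)).symm ▸ by ring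

lemma conv3 (Δ M : Matrix (Fin d) (Fin d) ℝ) :
    trace (Δ * M * Δᵀ) = ∑ i, dotProduct (Δ i) (M.mulVec (Δ i)) := by
  simp only [Matrix.trace, Matrix.diag_apply, Matrix.mul_apply, Matrix.transpose_apply,
    dotProduct, Matrix.mulVec, Finset.mul_sum, Finset.sum_mul]
  refine Finset.sum_congr rfl fun i _ => ?_
  rw [Finset.sum_comm]
  refine Finset.sum_congr rfl fun j _ => Finset.sum_congr rfl fun k _ => by ring

lemma gq (σ : ℝ) (S M V : Matrix (Fin d) (Fin d) ℝ) (hSsym : Sᵀ = S)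
    (hM : M = S + σ ^ 2 • 1) :
    trace ((V - 1) * S * (V - 1)ᵀ) + σ ^ 2 * trace (V * Vᵀ)
      = trace (V * M * Vᵀ) - 2 * trace (V * S) + trace S := by
  have h1 : (V - 1) * S * (V - 1)ᵀ = V * S * Vᵀ - V * S - S * Vᵀ + S := by
    rw [Matrix.transpose_sub, Matrix.transpose_one]
    noncomm_ring
  have h2 : trace (S * Vᵀ) = trace (V * S) := by
    calc trace (S * Vᵀ) = trace ((S * Vᵀ)ᵀ) := (Matrix.trace_transpose _).symm
      _ = trace (V * S) := by rw [Matrix.transpose_mul, Matrix.transpose_transpose, hSsym]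
  have h3 : V * M * Vᵀ = V * S * Vᵀ + σ ^ 2 • (V * Vᵀ) := by
    rw [hM, Matrix.mul_add, Matrix.add_mul, Matrix.mul_smul, Matrix.mul_one, Matrix.smul_mul]
  rw [h1, h3]
  simp only [Matrix.trace_add, Matrix.trace_sub, Matrix.trace_smul, smul_eq_mul]
  rw [h2]
  ring

lemma gdiff (σ : ℝ) (S M Wopt W : Matrix (Fin d) (Fin d) ℝ) (hSsym : Sᵀ = S)
    (hM : M = S + σ ^ 2 • 1) (hWM : Wopt * M = S) :
    trace ((W - 1) * S * (W - 1)ᵀ) + σ ^ 2 * trace (W * Wᵀ)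
      = trace ((Wopt - 1) * S * (Wopt - 1)ᵀ) + σ ^ 2 * trace (Wopt * Woptᵀ)
        + trace ((W - Wopt) * M * (W - Wopt)ᵀ) := by
  have hMsym : Mᵀ = M := by
    rw [hM, Matrix.transpose_add, hSsym, Matrix.transpose_smul, Matrix.transpose_one]
  set Δ := W - Wopt with hΔ
  have hW : W = Wopt + Δ := by rw [hΔ]; abel
  have cross1 : trace (Δ * M * Woptᵀ) = trace (Δ * S) := by
    rw [Matrix.mul_assoc]
    congr 1
    congr 1
    calc M * Woptᵀ = Mᵀ * Woptᵀ := by rw [hMsym]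
      _ = (Wopt * M)ᵀ := (Matrix.transpose_mul _ _).symm
      _ = Sᵀ := by rw [hWM]
      _ = S := hSsym
  have cross2 : trace (Wopt * M * Δᵀ) = trace (Δ * S) := by
    rw [hWM]
    calc trace (S * Δᵀ) = trace ((S * Δᵀ)ᵀ) := (Matrix.trace_transpose _).symm
      _ = trace (Δ * S) := by rw [Matrix.transpose_mul, Matrix.transpose_transpose, hSsym]
  have e1 : trace (W * M * Wᵀ) = trace (Wopt * M * Woptᵀ) + 2 * trace (Δ * S)
      + trace (Δ * M * Δᵀ) := by
    calc trace (W * M * Wᵀ)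
        = trace ((Wopt + Δ) * M * (Wopt + Δ)ᵀ) := by rw [← hW]
      _ = trace (Wopt * M * Woptᵀ) + trace (Wopt * M * Δᵀ) + trace (Δ * M * Woptᵀ)
          + trace (Δ * M * Δᵀ) := by
          rw [Matrix.transpose_add]
          simp only [Matrix.add_mul, Matrix.mul_add, Matrix.trace_add]
          ring
      _ = _ := by rw [cross1, cross2]; ring
  have e2 : trace (W * S) = trace (Wopt * S) + trace (Δ * S) := by
    rw [hW, Matrix.add_mul, Matrix.trace_add]
  rw [gq σ S M W hSsym hM, gq σ S M Wopt hSsym hM, e1, e2]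
  ring


end Alg2

/-- The minimizer of the denoising score-matching objective over affine
denoisers is unique: if `L(W, b) = L(W*, b*)` with `W* = Σ(Σ + σ²I)⁻¹`, `b* = (I − W*)μ`,
then `W = W*` and `b = b*`. -/
theorem gaussian_denoiser_unique_minimizer
    (d : ℕ) (hd : 1 ≤ d) (σ : ℝ) (hσ : 0 < σ)
    (p : Measure (EuclideanSpace ℝ (Fin d))) [IsProbabilityMeasure p]
    (μ : EuclideanSpace ℝ (Fin d)) (S : Matrix (Fin d) (Fin d) ℝ)
    (hp2 : MemLp id 2 p)
    (hmean : ∫ x, x ∂p = μ)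
    (hcov : ∀ i j, ∫ x, (x i - μ i) * (x j - μ j) ∂p = S i j)
    (W : Matrix (Fin d) (Fin d) ℝ) (b : EuclideanSpace ℝ (Fin d))
    (heq : dsmLoss d σ p W b =
      dsmLoss d σ p (S * (S + σ ^ 2 • 1)⁻¹)
        (toE ((1 - S * (S + σ ^ 2 • 1)⁻¹).mulVec μ))) :
    W = S * (S + σ ^ 2 • 1)⁻¹ ∧ b = toE ((1 - S * (S + σ ^ 2 • 1)⁻¹).mulVec μ) := by
  classical
  set M : Matrix (Fin d) (Fin d) ℝ := S + σ ^ 2 • 1 with hMdef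
  -- symmetry of S
  have hS : ∀ i j, S i j = S j i := by
    intro i j
    rw [← hcov i j, ← hcov j i]
    have : (fun x : EuclideanSpace ℝ (Fin d) => (x i - μ i) * (x j - μ j))
        = fun x => (x j - μ j) * (x i - μ i) := funext fun x => mul_comm _ _
    rw [this]
  have hSsym : Sᵀ = S := Matrix.ext fun i j => by rw [Matrix.transpose_apply]; exact hS j i
  -- p-side integrability
  have hpcoord : ∀ j, MemLp (fun x : EuclideanSpace ℝ (Fin d) => x j) 2 p := by
    intro j
    have := (EuclideanSpace.proj j (𝕜 := ℝ) (ι := Fin d)).comp_memLp' hp2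
    simpa [Function.comp] using this
  have hz2 : ∀ j, MemLp (fun x : EuclideanSpace ℝ (Fin d) => x j - μ j) 2 p :=
    fun j => (hpcoord j).sub (memLp_const _)
  have hzz : ∀ j k, Integrable
      (fun x : EuclideanSpace ℝ (Fin d) => (x j - μ j) * (x k - μ k)) p :=
    fun j k => memℒ2_mul_integrable (hz2 j) (hz2 k)
  -- S is positive semidefinite
  have hpsd : ∀ u : Fin d → ℝ, 0 ≤ dotProduct u (S.mulVec u) := by
    intro u
    have key : dotProduct u (S.mulVec u) = ∫ x, (∑ j, u j * (x j - μ j)) ^ 2 ∂p := by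
      have hpt : ∀ x : EuclideanSpace ℝ (Fin d), (∑ j, u j * (x j - μ j)) ^ 2
          = ∑ j, ∑ k, (u j * u k) * ((x j - μ j) * (x k - μ k)) := by
        intro x
        rw [sq, Finset.sum_mul_sum]
        exact Finset.sum_congr rfl fun j _ => Finset.sum_congr rfl fun k _ => by ring
      simp only [hpt]
      rw [integral_finset_sum _ (fun j _ =>
        integrable_finset_sum _ (fun k _ => (hzz j k).const_mul _))]
      have hj : ∀ j, ∫ x, ∑ k, (u j * u k) * ((x j - μ j) * (x k - μ k)) ∂p
          = ∑ k, (u j * u k) * S j k := by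
        intro j
        rw [integral_finset_sum _ (fun k _ => (hzz j k).const_mul _)]
        exact Finset.sum_congr rfl fun k _ => by rw [integral_const_mul, hcov j k]
      rw [Finset.sum_congr rfl fun j _ => hj j]
      simp only [dotProduct, Matrix.mulVec, Finset.mul_sum]
      exact Finset.sum_congr rfl fun j _ => Finset.sum_congr rfl fun k _ => by ring
    rw [key]
    exact integral_nonneg fun x => sq_nonneg _
  -- M is positive definite
  have hMpd : M.PosDef := by
    refine Matrix.PosDef.of_dotProduct_mulVec_pos ?_ ?_
    · show Mᴴ = M
      ext i j
      simp only [Matrix.conjTranspose_apply, hMdef, Matrix.add_apply, Matrix.smul_apply,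
        Matrix.one_apply, star_trivial, smul_eq_mul]
      rw [hS j i]
      by_cases h : i = j
      · subst h; simp
      · rw [if_neg h, if_neg (Ne.symm h)]
    · intro u hu
      have hMu : M.mulVec u = S.mulVec u + σ ^ 2 • u := by
        rw [hMdef, Matrix.add_mulVec, Matrix.smul_mulVec, Matrix.one_mulVec]
      rw [star_trivial, hMu, dotProduct_add, dotProduct_smul]
      have h2 : 0 < dotProduct u u := by
        obtain ⟨i, hi⟩ := Function.ne_iff.mp hu
        refine Finset.sum_pos' (fun i _ => mul_self_nonneg (u i)) ⟨i, Finset.mem_univ i, ?_⟩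
        exact mul_self_pos.mpr (by simpa using hi)
      have h1 := hpsd u
      have h3 : (0:ℝ) < σ ^ 2 • dotProduct u u := by
        rw [smul_eq_mul]; exact mul_pos (by positivity) h2
      linarith
  have hdet : IsUnit M.det := hMpd.det_pos.ne'.isUnit
  have hWM : (S * M⁻¹) * M = S := by
    rw [Matrix.mul_assoc, Matrix.nonsing_inv_mul M hdet, Matrix.mul_one]
  -- closed forms
  rw [dsm_closed d σ hσ p μ S hp2 hmean hcov W b,
    dsm_closed d σ hσ p μ S hp2 hmean hcov (S * M⁻¹) (toE ((1 - S * M⁻¹).mulVec μ))] at heq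
  -- the optimal bias term vanishes
  have hz : ∑ i, (((S * M⁻¹ - 1).mulVec μ) i + (toE ((1 - S * M⁻¹).mulVec μ)) i) ^ 2 = 0 := by
    refine Finset.sum_eq_zero fun i _ => ?_
    have h0 : (S * M⁻¹ - 1).mulVec μ + (1 - S * M⁻¹).mulVec μ = 0 := by
      rw [← Matrix.add_mulVec, show (S * M⁻¹ - 1) + (1 - S * M⁻¹) = 0 from by abel,
        Matrix.zero_mulVec]
    have h1 := congrFun h0 i
    have h2 : ((S * M⁻¹ - 1).mulVec μ) i + (toE ((1 - S * M⁻¹).mulVec μ)) i = 0 := by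
      simpa [toE] using h1
    rw [h2]; ring
  rw [conv1 (W - 1) S, conv2 W, conv1 (S * M⁻¹ - 1) S, conv2 (S * M⁻¹), hz] at heq
  have halg := gdiff σ S M (S * M⁻¹) W hSsym hMdef hWM
  set Δ : Matrix (Fin d) (Fin d) ℝ := W - S * M⁻¹ with hΔdef
  have hterm : ∀ i, 0 ≤ dotProduct (Δ i) (M.mulVec (Δ i)) := by
    intro i
    by_cases h : Δ i = 0
    · rw [h]; simp
    · have := hMpd.dotProduct_mulVec_pos h
      rw [star_trivial] at this
      exact this.le
  have hdotnn : (0:ℝ) ≤ ∑ i, (((W - 1).mulVec μ) i + b i) ^ 2 :=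
    Finset.sum_nonneg fun i _ => sq_nonneg _
  have htrnn : (0:ℝ) ≤ trace (Δ * M * Δᵀ) := by
    rw [conv3]
    exact Finset.sum_nonneg fun i _ => hterm i
  have hmain : (∑ i, (((W - 1).mulVec μ) i + b i) ^ 2) + trace (Δ * M * Δᵀ) = 0 := by
    linarith
  have hdot0 : ∑ i, (((W - 1).mulVec μ) i + b i) ^ 2 = 0 := by linarith
  have htr0 : trace (Δ * M * Δᵀ) = 0 := by linarith
  -- W = Wopt
  have hrows : ∀ i, Δ i = 0 := by
    intro i
    by_contra h
    have hpos := hMpd.dotProduct_mulVec_pos h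
    rw [star_trivial] at hpos
    have hsum0 : ∑ i, dotProduct (Δ i) (M.mulVec (Δ i)) = 0 := by rw [← conv3, htr0]
    have := (Finset.sum_eq_zero_iff_of_nonneg (fun i _ => hterm i)).mp hsum0 i (Finset.mem_univ i)
    linarith
  have hΔ0 : Δ = 0 := by
    ext i j
    simpa using congrFun (hrows i) j
  have hWeq : W = S * M⁻¹ := sub_eq_zero.mp (by rw [← hΔdef]; exact hΔ0)
  refine ⟨hWeq, ?_⟩
  -- b = bopt
  have hb0 : ∀ i, ((W - 1).mulVec μ) i + b i = 0 := by
    intro i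
    have hsq := (Finset.sum_eq_zero_iff_of_nonneg (fun i _ => sq_nonneg _)).mp hdot0 i
      (Finset.mem_univ i)
    exact pow_eq_zero_iff (two_ne_zero) |>.mp hsq
  ext i
  have h1 := hb0 i
  have h2 : ((W - 1).mulVec μ) i + ((1 - W).mulVec μ) i = 0 := by
    have h0 : (W - 1).mulVec μ + (1 - W).mulVec μ = 0 := by
      rw [← Matrix.add_mulVec, show (W - 1) + (1 - W) = 0 from by abel, Matrix.zero_mulVec]
    exact congrFun h0 i
  have : b i = ((1 - W).mulVec μ) i := by linarith
  rw [this, hWeq]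
  rfl
end

section
/- Let y₁, …, y_N ∈ ℝ^d be finitely many points, let σ > 0, and define the multi-delta optimal denoiser D_M(z) = (∑_{i=1}^N exp(−‖z − yᵢ‖²/(2σ²)) yᵢ) / (∑_{i=1}^N exp(−‖z − yᵢ‖²/(2σ²))). Let x be uniformly distributed on {y₁, …, y_N} and ε ~ N(0, σ²I) independent of x. Then for every Borel measurable function f : ℝ^d → ℝ^d such that (x, ε) ↦ ‖f(x + ε) − x‖² is integrable, (1/N)∑_{i=1}^N ∫ ‖D_M(yᵢ + ε) − yᵢ‖² dN(0,σ²I)(ε) ≤ (1/N)∑_{i=1}^N ∫ ‖f(yᵢ + ε) − yᵢ‖² dN(0,σ²I)(ε); that is, D_M minimizes the denoising mean-squared error over all measurable denoisers for the multi-delta data distribution. -/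
open MeasureTheory ProbabilityTheory Matrix
open scoped ENNReal NNReal RealInnerProductSpace

/-- The multi-delta optimal denoiser: the softmax-weighted convex combination
`D_M(z) = (∑ exp(−‖z − yᵢ‖²/(2σ²)) yᵢ) / (∑ exp(−‖z − yᵢ‖²/(2σ²)))`. -/
noncomputable def multiDeltaDenoiser {d N : ℕ} (y : Fin N → EuclideanSpace ℝ (Fin d))
    (σ : ℝ) (z : EuclideanSpace ℝ (Fin d)) : EuclideanSpace ℝ (Fin d) :=
  (∑ i, Real.exp (-‖z - y i‖ ^ 2 / (2 * σ ^ 2)))⁻¹ •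
    ∑ i, Real.exp (-‖z - y i‖ ^ 2 / (2 * σ ^ 2)) • y i

section Auxiliary

open Real

theorem MultiDelta.lintegral_pi_prod : ∀ {n : ℕ} (μ : Fin n → Measure ℝ)
    [∀ i, SigmaFinite (μ i)] (f : Fin n → ℝ → ℝ≥0∞), (∀ i, Measurable (f i)) →
    ∫⁻ x, ∏ i, f i (x i) ∂Measure.pi μ = ∏ i, ∫⁻ t, f i t ∂(μ i)
  | 0, μ, _, f, hf => by
      rw [Measure.pi_of_empty]
      simp
  | (n+1), μ, _, f, hf => by
      have mp := (measurePreserving_piFinSuccAbove μ 0).symm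
      rw [← mp.map_eq, lintegral_map_equiv]
      have h2 : (fun i : Fin n => μ ((0 : Fin (n+1)).succAbove i)) = fun i => μ i.succ := by
        funext i; rw [Fin.zero_succAbove]
      rw [show (fun p => ∏ i, f i
            (((MeasurableEquiv.piFinSuccAbove (fun _ : Fin (n+1) => ℝ) 0).symm p) i))
          = fun p : ℝ × (Fin n → ℝ) => f 0 p.1 * ∏ i : Fin n, f i.succ (p.2 i) by
        funext p
        simp only [MeasurableEquiv.piFinSuccAbove_symm_apply, Fin.insertNthEquiv,
          Equiv.coe_fn_mk, Fin.insertNth_zero, Fin.prod_univ_succ, Fin.cons_zero,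
          Fin.cons_succ, cast_eq]]
      rw [h2, lintegral_prod_mul (f := f 0)
        (g := fun q : Fin n → ℝ => ∏ i, f i.succ (q i)) (hf 0).aemeasurable
        (Finset.measurable_prod _ fun i _ =>
          (hf i.succ).comp (measurable_pi_apply i)).aemeasurable,
        MultiDelta.lintegral_pi_prod _ _ (fun i => hf i.succ), Fin.prod_univ_succ]

theorem MultiDelta.map_equiv_withDensity {α β : Type*} [MeasurableSpace α] [MeasurableSpace β]
    (e : α ≃ᵐ β) (μ : Measure α) (g : β → ℝ≥0∞) (hg : Measurable g) :
    (μ.withDensity fun a => g (e a)).map e = (μ.map e).withDensity g := by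
  ext s hs
  rw [MeasurableEquiv.map_apply, withDensity_apply _ hs,
    withDensity_apply _ (hs.preimage e.measurable), setLIntegral_map hs hg e.measurable]

theorem MultiDelta.pi_gauss_eq (d : ℕ) {v : ℝ≥0} (hv : v ≠ 0) :
    (Measure.pi fun _ : Fin d => gaussianReal 0 v)
      = (Measure.pi fun _ : Fin d => (volume : Measure ℝ)).withDensity
          (fun x => ∏ i, gaussianPDF 0 v (x i)) := by
  refine Measure.pi_eq fun s hs => ?_
  rw [withDensity_apply _ (MeasurableSet.univ_pi hs)]
  rw [← lintegral_indicator (MeasurableSet.univ_pi hs)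
    (fun x : Fin d → ℝ => ∏ i, gaussianPDF 0 v (x i))]
  have hind : (Set.indicator (Set.pi Set.univ s) fun x => ∏ i, gaussianPDF 0 v (x i))
      = fun x => ∏ i, Set.indicator (s i) (gaussianPDF 0 v) (x i) := by
    funext x
    by_cases hx : x ∈ Set.pi Set.univ s
    · rw [Set.indicator_of_mem hx]
      exact Finset.prod_congr rfl fun i _ =>
        (Set.indicator_of_mem (hx i (Set.mem_univ i)) _).symm
    · rw [Set.indicator_of_notMem hx]
      rw [Set.mem_univ_pi] at hx
      push_neg at hx
      obtain ⟨j, hj⟩ := hx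
      exact (Finset.prod_eq_zero (Finset.mem_univ j) (Set.indicator_of_notMem hj _)).symm
  rw [hind, MultiDelta.lintegral_pi_prod _ _
    (fun i => (measurable_gaussianPDF 0 v).indicator (hs i))]
  refine Finset.prod_congr rfl fun i _ => ?_
  rw [lintegral_indicator (hs i), ← gaussianReal_apply 0 hv (s i)]

theorem MultiDelta.gaussVec_eq_withDensity (d : ℕ) {σ : ℝ} (hσ : 0 < σ) :
    gaussVec d σ = (volume : Measure (EuclideanSpace ℝ (Fin d))).withDensity
      (fun z => ∏ i, gaussianPDF 0 (Real.toNNReal (σ ^ 2)) (z i)) := by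
  have hv : Real.toNNReal (σ ^ 2) ≠ 0 := by
    simp only [ne_eq, Real.toNNReal_eq_zero, not_le]
    positivity
  rw [gaussVec, MultiDelta.pi_gauss_eq d hv]
  have : (fun x : Fin d → ℝ => ∏ i, gaussianPDF 0 (Real.toNNReal (σ ^ 2)) (x i))
      = fun x => (fun z : EuclideanSpace ℝ (Fin d) =>
          ∏ i, gaussianPDF 0 (Real.toNNReal (σ ^ 2)) (z i))
        ((MeasurableEquiv.toLp 2 (Fin d → ℝ)) x) := rfl
  rw [this, MultiDelta.map_equiv_withDensity (MeasurableEquiv.toLp 2 (Fin d → ℝ)) _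
    (fun z : EuclideanSpace ℝ (Fin d) => ∏ i, gaussianPDF 0 (Real.toNNReal (σ ^ 2)) (z i))
    (Finset.measurable_prod _ fun i _ =>
      (measurable_gaussianPDF _ _).comp ((measurable_pi_apply i).comp
        (WithLp.measurable_ofLp 2 (Fin d → ℝ))))]
  congr 1
  rw [← volume_pi]
  exact (PiLp.volume_preserving_toLp (Fin d)).map_eq

theorem MultiDelta.prod_gaussianPDFReal (d : ℕ) {σ : ℝ} (hσ : 0 < σ)
    (z : EuclideanSpace ℝ (Fin d)) :
    ∏ i, gaussianPDFReal 0 (Real.toNNReal (σ ^ 2)) (z i)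
      = ((Real.sqrt (2 * π * σ ^ 2))⁻¹) ^ d * Real.exp (-‖z‖ ^ 2 / (2 * σ ^ 2)) := by
  have hvr : ((Real.toNNReal (σ ^ 2) : ℝ≥0) : ℝ) = σ ^ 2 :=
    Real.coe_toNNReal _ (sq_nonneg σ)
  have hnorm : ‖z‖ ^ 2 = ∑ i, (z i) ^ 2 := by
    rw [EuclideanSpace.norm_eq, Real.sq_sqrt (Finset.sum_nonneg fun i _ => sq_nonneg _)]
    simp [Real.norm_eq_abs, sq_abs]
  simp only [gaussianPDFReal, hvr, sub_zero]
  rw [Finset.prod_mul_distrib, Finset.prod_const, Finset.card_univ, Fintype.card_fin,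
    ← Real.exp_sum]
  congr 1
  rw [hnorm, ← Finset.sum_div, Finset.sum_neg_distrib, neg_div]

theorem MultiDelta.weighted_mean_min {d N : ℕ} (hN : 0 < N)
    (y : Fin N → EuclideanSpace ℝ (Fin d))
    (w : Fin N → ℝ) (hw : ∀ i, 0 < w i) (a : EuclideanSpace ℝ (Fin d)) :
    ∑ i, w i * ‖((∑ j, w j)⁻¹ • ∑ j, w j • y j) - y i‖ ^ 2 ≤ ∑ i, w i * ‖a - y i‖ ^ 2 := by
  haveI : Nonempty (Fin N) := ⟨⟨0, hN⟩⟩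
  set S := ∑ j, w j with hS
  have hSpos : 0 < S := Finset.sum_pos (fun i _ => hw i) Finset.univ_nonempty
  set m : EuclideanSpace ℝ (Fin d) := S⁻¹ • ∑ j, w j • y j with hm
  have hsum : ∑ j, w j • y j = S • m := (smul_inv_smul₀ hSpos.ne' _).symm
  have expand : ∀ b : EuclideanSpace ℝ (Fin d), ∑ i, w i * ‖b - y i‖ ^ 2
      = S * ‖b‖ ^ 2 - 2 * (S * ⟪b, m⟫) + ∑ i, w i * ‖y i‖ ^ 2 := by
    intro b
    have h1 : ∀ i, w i * ‖b - y i‖ ^ 2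
        = w i * ‖b‖ ^ 2 - 2 * (w i * ⟪b, y i⟫) + w i * ‖y i‖ ^ 2 := by
      intro i
      rw [norm_sub_sq_real]
      ring
    rw [Finset.sum_congr rfl fun i _ => h1 i]
    have h2 : ⟪b, ∑ j, w j • y j⟫ = ∑ j, w j * ⟪b, y j⟫ := by
      rw [inner_sum]
      exact Finset.sum_congr rfl fun j _ => real_inner_smul_right _ _ _
    have h3 : S * ⟪b, m⟫ = ∑ j, w j * ⟪b, y j⟫ := by
      rw [← h2, ← real_inner_smul_right, ← hsum]
    rw [h3, Finset.sum_add_distrib, Finset.sum_sub_distrib, ← Finset.sum_mul,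
      ← Finset.mul_sum]
  rw [expand a, expand m]
  have hself : ⟪m, m⟫ = ‖m‖ ^ 2 := real_inner_self_eq_norm_sq m
  have hnn : (0:ℝ) ≤ ‖a‖ ^ 2 - 2 * ⟪a, m⟫ + ‖m‖ ^ 2 := by
    rw [← norm_sub_sq_real]
    positivity
  nlinarith [mul_nonneg hSpos.le hnn]

end Auxiliary

/-- The multi-delta denoiser `D_M` minimizes the expected denoising
mean-squared error over all measurable denoisers, for data uniform on `{y₁, …, y_N}` and
independent Gaussian noise `N(0, σ²I)`. -/
theorem multiDeltaDenoiser_minimizes_mse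
    (d N : ℕ) (hN : 0 < N) (σ : ℝ) (hσ : 0 < σ)
    (y : Fin N → EuclideanSpace ℝ (Fin d))
    (f : EuclideanSpace ℝ (Fin d) → EuclideanSpace ℝ (Fin d)) (hf : Measurable f)
    (hint : ∀ i, Integrable (fun ε => ‖f (y i + ε) - y i‖ ^ 2) (gaussVec d σ)) :
    (1 / N : ℝ) * ∑ i, ∫ ε, ‖multiDeltaDenoiser y σ (y i + ε) - y i‖ ^ 2 ∂(gaussVec d σ) ≤
      (1 / N : ℝ) * ∑ i, ∫ ε, ‖f (y i + ε) - y i‖ ^ 2 ∂(gaussVec d σ) := by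
  classical
  haveI : Nonempty (Fin N) := ⟨⟨0, hN⟩⟩
  set D : (EuclideanSpace ℝ (Fin d)) → (EuclideanSpace ℝ (Fin d)) := multiDeltaDenoiser y σ with hD
  set C : ℝ := ((Real.sqrt (2 * Real.pi * σ ^ 2))⁻¹) ^ d with hCdef
  have hC0 : 0 ≤ C := by positivity
  set g₀ : (EuclideanSpace ℝ (Fin d)) → ℝ := fun z => C * Real.exp (-‖z‖ ^ 2 / (2 * σ ^ 2)) with hg₀def
  have hg₀nonneg : ∀ z, 0 ≤ g₀ z := fun z => by positivity
  have hg₀cont : Continuous g₀ :=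
    continuous_const.mul (Real.continuous_exp.comp
      (((continuous_norm.pow 2).neg).div_const _))
  -- the Gaussian measure as a density against Lebesgue measure
  have hγd : gaussVec d σ = (volume : Measure (EuclideanSpace ℝ (Fin d))).withDensity
      (fun z => ENNReal.ofReal (g₀ z)) := by
    rw [MultiDelta.gaussVec_eq_withDensity d hσ]
    congr 1
    funext z
    rw [show g₀ z = ∏ i, gaussianPDFReal 0 (Real.toNNReal (σ ^ 2)) (z i) from
        (MultiDelta.prod_gaussianPDFReal d hσ z).symm,
      ENNReal.ofReal_prod_of_nonneg (fun i _ => gaussianPDFReal_nonneg _ _ _)]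
    rfl
  have hWmeas : Measurable fun z : (EuclideanSpace ℝ (Fin d)) => (g₀ z).toNNReal :=
    hg₀cont.measurable.real_toNNReal
  have hofW : (fun z : (EuclideanSpace ℝ (Fin d)) => ENNReal.ofReal (g₀ z))
      = fun z => (((g₀ z).toNNReal : ℝ≥0) : ℝ≥0∞) := rfl
  have hsmul_eq : ∀ F : (EuclideanSpace ℝ (Fin d)) → ℝ, (fun z => (g₀ z).toNNReal • F z) = fun z => F z * g₀ z := by
    intro F
    funext z
    rw [NNReal.smul_def, Real.coe_toNNReal _ (hg₀nonneg z), smul_eq_mul, mul_comm]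
  have htrans_int : ∀ F : (EuclideanSpace ℝ (Fin d)) → ℝ,
      ∫ ε, F ε ∂gaussVec d σ = ∫ z, F z * g₀ z ∂volume := by
    intro F
    rw [hγd, hofW, integral_withDensity_eq_integral_smul hWmeas F, hsmul_eq]
  have htrans_integrable : ∀ F : (EuclideanSpace ℝ (Fin d)) → ℝ,
      Integrable F (gaussVec d σ) ↔ Integrable (fun z => F z * g₀ z) volume := by
    intro F
    rw [hγd, hofW, integrable_withDensity_iff_integrable_smul hWmeas, hsmul_eq]
  -- shifting by a constant
  have hshift : ∀ (c : (EuclideanSpace ℝ (Fin d))) (F : (EuclideanSpace ℝ (Fin d)) → ℝ),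
      ∫ ε, F (c + ε) ∂gaussVec d σ = ∫ z, F z * g₀ (z - c) ∂volume := by
    intro c F
    rw [htrans_int (fun ε => F (c + ε)),
      ← integral_add_left_eq_self (μ := (volume : Measure (EuclideanSpace ℝ (Fin d)))) (fun z => F z * g₀ (z - c)) c]
    congr 1
    funext z
    rw [add_sub_cancel_left]
  have hshift_integrable : ∀ (c : (EuclideanSpace ℝ (Fin d))) (F : (EuclideanSpace ℝ (Fin d)) → ℝ),
      Integrable (fun ε => F (c + ε)) (gaussVec d σ)
        ↔ Integrable (fun z => F z * g₀ (z - c)) volume := by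
    intro c F
    rw [htrans_integrable (fun ε => F (c + ε))]
    constructor
    · intro h
      have h2 := h.comp_add_left (-c)
      have : (fun t : (EuclideanSpace ℝ (Fin d)) => F (c + (-c + t)) * g₀ (-c + t))
          = fun t => F t * g₀ (t - c) := by
        funext t
        rw [add_neg_cancel_left, neg_add_eq_sub]
      rwa [this] at h2
    · intro h
      have h2 := h.comp_add_left c
      have : (fun t : (EuclideanSpace ℝ (Fin d)) => F (c + t) * g₀ (c + t - c))
          = fun t => F (c + t) * g₀ t := by
        funext t
        rw [add_sub_cancel_left]
      rwa [this] at h2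
  -- positivity of the softmax weights
  have hSpos : ∀ z : (EuclideanSpace ℝ (Fin d)), 0 < ∑ i, Real.exp (-‖z - y i‖ ^ 2 / (2 * σ ^ 2)) := fun z =>
    Finset.sum_pos (fun i _ => Real.exp_pos _) Finset.univ_nonempty
  -- continuity of the denoiser
  have hwcont : ∀ i, Continuous fun z : (EuclideanSpace ℝ (Fin d)) => Real.exp (-‖z - y i‖ ^ 2 / (2 * σ ^ 2)) :=
    fun i => Real.continuous_exp.comp
      ((((continuous_id.sub continuous_const).norm.pow 2).neg).div_const _)
  have hDcont : Continuous D := by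
    rw [hD]
    unfold multiDeltaDenoiser
    exact ((continuous_finset_sum _ fun i _ => hwcont i).inv₀
        fun z => (hSpos z).ne').smul
      (continuous_finset_sum _ fun i _ => (hwcont i).smul continuous_const)
  -- the denoiser is bounded
  set M : ℝ := ∑ j, ‖y j‖ with hMdef
  have hM0 : 0 ≤ M := Finset.sum_nonneg fun j _ => norm_nonneg _
  have hyM : ∀ i, ‖y i‖ ≤ M :=
    fun i => Finset.single_le_sum (fun j _ => norm_nonneg (y j)) (Finset.mem_univ i)
  have hDM : ∀ z, ‖D z‖ ≤ M := by
    intro z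
    set S := ∑ i, Real.exp (-‖z - y i‖ ^ 2 / (2 * σ ^ 2)) with hSdef
    have hS : 0 < S := hSpos z
    have h1 : ‖D z‖ ≤ S⁻¹ * ∑ j, Real.exp (-‖z - y j‖ ^ 2 / (2 * σ ^ 2)) * ‖y j‖ := by
      rw [hD]
      unfold multiDeltaDenoiser
      rw [norm_smul, Real.norm_eq_abs, abs_of_pos (inv_pos.mpr hS)]
      refine mul_le_mul_of_nonneg_left ?_ (inv_pos.mpr hS).le
      refine (norm_sum_le _ _).trans ?_
      refine Finset.sum_le_sum fun j _ => ?_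
      rw [norm_smul, Real.norm_eq_abs, abs_of_pos (Real.exp_pos _)]
    refine h1.trans ?_
    rw [inv_mul_le_iff₀ hS, hMdef, Finset.sum_mul]
    refine Finset.sum_le_sum fun j _ => ?_
    exact mul_le_mul_of_nonneg_left (hyM j) (Real.exp_pos _).le
  have hDb : ∀ z (i : Fin N), ‖D z - y i‖ ^ 2 ≤ (2 * M) ^ 2 := by
    intro z i
    refine pow_le_pow_left₀ (norm_nonneg _) ?_ 2
    calc ‖D z - y i‖ ≤ ‖D z‖ + ‖y i‖ := norm_sub_le _ _
      _ ≤ M + M := add_le_add (hDM z) (hyM i)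
      _ = 2 * M := by ring
  -- probability measure instance
  haveI : IsProbabilityMeasure (gaussVec d σ) := by
    rw [gaussVec]
    exact Measure.isProbabilityMeasure_map
      (MeasurableEquiv.toLp 2 (Fin d → ℝ)).measurable.aemeasurable
  -- integrability facts
  have base : ∀ i, Integrable (fun z : (EuclideanSpace ℝ (Fin d)) => g₀ (z - y i)) volume := by
    intro i
    have h1 : Integrable (fun _ : (EuclideanSpace ℝ (Fin d)) => (1:ℝ)) (gaussVec d σ) := integrable_const 1
    have h2 := (hshift_integrable (y i) (fun _ => (1:ℝ))).mp h1
    simpa using h2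
  have hfInt : ∀ i, Integrable (fun z : (EuclideanSpace ℝ (Fin d)) => ‖f z - y i‖ ^ 2 * g₀ (z - y i)) volume :=
    fun i => (hshift_integrable (y i) (fun z => ‖f z - y i‖ ^ 2)).mp (hint i)
  have hDInt : ∀ i, Integrable (fun z : (EuclideanSpace ℝ (Fin d)) => ‖D z - y i‖ ^ 2 * g₀ (z - y i)) volume := by
    intro i
    refine Integrable.mono' ((base i).const_mul ((2 * M) ^ 2)) ?_ (ae_of_all _ fun z => ?_)
    · exact (((hDcont.sub continuous_const).norm.pow 2).mul
        (hg₀cont.comp (continuous_id.sub continuous_const))).aestronglyMeasurable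
    · rw [Real.norm_eq_abs, abs_of_nonneg (mul_nonneg (by positivity) (hg₀nonneg _))]
      exact mul_le_mul_of_nonneg_right (hDb z i) (hg₀nonneg _)
  -- pointwise optimality
  have hpoint : ∀ z : (EuclideanSpace ℝ (Fin d)), ∑ i, ‖D z - y i‖ ^ 2 * g₀ (z - y i)
      ≤ ∑ i, ‖f z - y i‖ ^ 2 * g₀ (z - y i) := by
    intro z
    have key := MultiDelta.weighted_mean_min hN y
      (fun i => Real.exp (-‖z - y i‖ ^ 2 / (2 * σ ^ 2)))
      (fun i => Real.exp_pos _) (f z)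
    have hDz : D z = (∑ j, Real.exp (-‖z - y j‖ ^ 2 / (2 * σ ^ 2)))⁻¹ •
        ∑ j, Real.exp (-‖z - y j‖ ^ 2 / (2 * σ ^ 2)) • y j := rfl
    calc ∑ i, ‖D z - y i‖ ^ 2 * g₀ (z - y i)
        = C * ∑ i, Real.exp (-‖z - y i‖ ^ 2 / (2 * σ ^ 2)) * ‖D z - y i‖ ^ 2 := by
          rw [Finset.mul_sum]
          refine Finset.sum_congr rfl fun i _ => ?_
          rw [hg₀def]
          simp only []
          ring
      _ ≤ C * ∑ i, Real.exp (-‖z - y i‖ ^ 2 / (2 * σ ^ 2)) * ‖f z - y i‖ ^ 2 := by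
          refine mul_le_mul_of_nonneg_left ?_ hC0
          rw [hDz]
          exact key
      _ = ∑ i, ‖f z - y i‖ ^ 2 * g₀ (z - y i) := by
          rw [Finset.mul_sum]
          refine Finset.sum_congr rfl fun i _ => ?_
          rw [hg₀def]
          simp only []
          ring
  -- conclusion
  refine mul_le_mul_of_nonneg_left ?_ (by positivity)
  have lhs_eq : ∀ i, ∫ ε, ‖D (y i + ε) - y i‖ ^ 2 ∂gaussVec d σ
      = ∫ z, ‖D z - y i‖ ^ 2 * g₀ (z - y i) ∂volume :=
    fun i => hshift (y i) (fun z => ‖D z - y i‖ ^ 2)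
  have rhs_eq : ∀ i, ∫ ε, ‖f (y i + ε) - y i‖ ^ 2 ∂gaussVec d σ
      = ∫ z, ‖f z - y i‖ ^ 2 * g₀ (z - y i) ∂volume :=
    fun i => hshift (y i) (fun z => ‖f z - y i‖ ^ 2)
  rw [Finset.sum_congr rfl fun i _ => lhs_eq i, Finset.sum_congr rfl fun i _ => rhs_eq i,
    ← integral_finset_sum _ (fun i _ => hDInt i), ← integral_finset_sum _ (fun i _ => hfInt i)]
  exact integral_mono (integrable_finset_sum _ fun i _ => hDInt i)
    (integrable_finset_sum _ fun i _ => hfInt i) hpoint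
end
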